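/- Let 0 ≤ μ < ∞, let I be a finite index set, and let (x_i, g_i, f_i) for i ∈ I be triples with x_i, g_i ∈ ℝ^d and f_i ∈ ℝ. Then there exists a function f : ℝ^d → ℝ such that x ↦ f(x) − (μ/2)‖x‖² is convex, f(x_i) = f_i for all i ∈ I, and g_i is a subgradient of f at x_i for all i ∈ I, if and only if f_i ≥ f_j + ⟨g_j, x_i − x_j⟩ + (μ/2)‖x_i − x_j‖² holds for all i, j ∈ I. -/

import Mathlib

open scoped RealInnerProductSpace


section Aux
variable {d : ℕ}

private lemma affine_convexOn (c : ℝ) (v : EuclideanSpace ℝ (Fin d)) :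
    ConvexOn ℝ Set.univ (fun y : EuclideanSpace ℝ (Fin d) => c + ⟪v, y⟫) := by
  refine ⟨convex_univ, ?_⟩
  intro p _ q _ a b ha hb hab
  simp only [inner_add_right, real_inner_smul_right, smul_eq_mul]
  have hc : a*c + b*c = c := by rw [← add_mul, hab, one_mul]
  linarith

private lemma norm_combo_sq (p q : EuclideanSpace ℝ (Fin d)) (t : ℝ) :
    ‖(1-t)•p + t•q‖^2 = (1-t)*‖p‖^2 + t*‖q‖^2 - t*(1-t)*‖q-p‖^2 := by
  simp only [← real_inner_self_eq_norm_sq]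
  simp only [inner_add_left, inner_add_right, inner_sub_left, inner_sub_right,
    real_inner_smul_left, real_inner_smul_right, real_inner_comm p q]
  ring

private lemma convexOn_sup' {ι : Type*} (s : Finset ι) (hs : s.Nonempty)
    (ψ : ι → EuclideanSpace ℝ (Fin d) → ℝ)
    (h : ∀ i ∈ s, ConvexOn ℝ Set.univ (ψ i)) :
    ConvexOn ℝ Set.univ (fun y => s.sup' hs (fun i => ψ i y)) := by
  induction hs using Finset.Nonempty.cons_induction with
  | singleton a => simpa using h a (by simp)
  | cons a s ha hs ih =>
    have := (h a (by simp)).sup (ih (fun i hi => h i (Finset.mem_cons_of_mem hi)))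
    have heq : (fun y => (Finset.cons a s ha).sup' (Finset.cons_nonempty ha) fun i => ψ i y)
        = fun y => ψ a y ⊔ s.sup' hs fun i => ψ i y := by
      funext y; exact Finset.sup'_cons hs (fun i => ψ i y)
    rw [heq]
    simpa [Pi.sup_def] using this

end Aux


/-- Corollary 2 of the paper (`F_{μ,∞}`-interpolability):
there exists a (possibly nonsmooth) `μ`-strongly convex function interpolating the data
triples (with `g i` a subgradient at `x i`) iff
`f_i ≥ f_j + ⟪g_j, x_i - x_j⟫ + (μ/2)‖x_i - x_j‖²` for all `i, j`. -/
theorem strongly_convex_interpolation {d : ℕ} {ι : Type*} [Fintype ι]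
    (μ : ℝ) (hμ : 0 ≤ μ)
    (x g : ι → EuclideanSpace ℝ (Fin d)) (fv : ι → ℝ) :
    (∃ f : EuclideanSpace ℝ (Fin d) → ℝ,
        ConvexOn ℝ Set.univ (fun y => f y - μ / 2 * ‖y‖ ^ 2) ∧
        (∀ i, f (x i) = fv i) ∧
        (∀ i, ∀ y : EuclideanSpace ℝ (Fin d), f y ≥ f (x i) + ⟪g i, y - x i⟫)) ↔
      (∀ i j, fv i ≥ fv j + ⟪g j, x i - x j⟫ + μ / 2 * ‖x i - x j‖ ^ 2) := by
  constructor
  · rintro ⟨f, hconv, heq, hsub⟩ i j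
    set c : ℝ := μ / 2 * ‖x i - x j‖ ^ 2 with hcdef
    have hc0 : 0 ≤ c := mul_nonneg (by linarith) (sq_nonneg _)
    have key : ∀ t : ℝ, 0 < t → t ≤ 1 →
        fv j + ⟪g j, x i - x j⟫ + (1-t)*c ≤ fv i := by
      intro t ht0 ht1
      set z : EuclideanSpace ℝ (Fin d) := (1-t) • x j + t • x i with hzdef
      have hcv := hconv.2 (Set.mem_univ (x j)) (Set.mem_univ (x i))
        (by linarith : (0:ℝ) ≤ 1 - t) ht0.le (by ring)
      simp only [smul_eq_mul] at hcv
      have hs := hsub j z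
      have hz : z - x j = t • (x i - x j) := by
        simp only [hzdef]; module
      have hin : ⟪g j, z - x j⟫ = t * ⟪g j, x i - x j⟫ := by
        rw [hz, real_inner_smul_right]
      have hn : ‖z‖^2 = (1-t)*‖x j‖^2 + t*‖x i‖^2 - t*(1-t)*‖x i - x j‖^2 :=
        norm_combo_sq (x j) (x i) t
      rw [hin] at hs
      rw [heq i, heq j] at hcv
      rw [hn] at hcv
      rw [heq j] at hs
      have hdiv : t * (fv j + ⟪g j, x i - x j⟫ + (1-t)*c - fv i) ≤ 0 := by
        simp only [hcdef]; nlinarith [hs, hcv]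
      nlinarith [hdiv, ht0]
    show fv j + ⟪g j, x i - x j⟫ + c ≤ fv i
    refine le_of_forall_pos_le_add ?_
    intro ε hε
    set t : ℝ := min 1 (ε / (c + 1)) with htdef
    have ht0 : 0 < t := lt_min one_pos (div_pos hε (by linarith))
    have ht1 : t ≤ 1 := min_le_left _ _
    have htc : t * (c + 1) ≤ ε := by
      rw [← le_div_iff₀ (by linarith : (0:ℝ) < c + 1)]
      exact min_le_right _ _
    have := key t ht0 ht1
    nlinarith [this, ht0, hc0]
  · intro h
    by_cases hne : Nonempty ι
    · have hu : (Finset.univ : Finset ι).Nonempty := Finset.univ_nonempty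
      set φ : ι → EuclideanSpace ℝ (Fin d) → ℝ :=
        fun i y => fv i + ⟪g i, y - x i⟫ + μ / 2 * ‖y - x i‖ ^ 2 with hφ
      refine ⟨fun y => Finset.univ.sup' hu (fun i => φ i y), ?_, ?_, ?_⟩
      · have hrw : (fun y : EuclideanSpace ℝ (Fin d) =>
            Finset.univ.sup' hu (fun i => φ i y) - μ / 2 * ‖y‖ ^ 2)
            = fun y => Finset.univ.sup' hu
              (fun i => (fv i - ⟪g i, x i⟫ + μ / 2 * ‖x i‖ ^ 2) + ⟪g i - μ • x i, y⟫) := by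
          funext y
          have hmax : ∀ a b : ℝ, (fun z => z - μ / 2 * ‖y‖ ^ 2) (a ⊔ b)
              = (fun z => z - μ / 2 * ‖y‖ ^ 2) a ⊔ (fun z => z - μ / 2 * ‖y‖ ^ 2) b :=
            fun a b => (max_sub_sub_right a b _).symm
          have hcomp := Finset.comp_sup'_eq_sup'_comp hu (f := fun i => φ i y)
            (fun z => z - μ / 2 * ‖y‖ ^ 2) hmax
          simp only [Function.comp] at hcomp
          rw [hcomp]
          congr 1
          funext i
          simp only [hφ, Function.comp]
          have h1 : ‖y - x i‖^2 = ‖y‖^2 - 2*⟪y, x i⟫ + ‖x i‖^2 := norm_sub_sq_real y (x i)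
          have h2 : ⟪g i - μ • x i, y⟫ = ⟪g i, y⟫ - μ * ⟪x i, y⟫ := by
            rw [inner_sub_left, real_inner_smul_left]
          have h3 : ⟪g i, y - x i⟫ = ⟪g i, y⟫ - ⟪g i, x i⟫ := inner_sub_right _ _ _
          rw [h1, h2, h3, real_inner_comm y (x i)]
          ring
        rw [hrw]
        exact convexOn_sup' _ hu _ (fun i _ => affine_convexOn _ _)
      · intro i
        apply le_antisymm
        · apply Finset.sup'_le
          intro j _
          simpa [hφ] using h i j
        · have := Finset.le_sup' (fun j => φ j (x i)) (Finset.mem_univ i)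
          exact le_trans (le_of_eq (by simp [hφ])) this
      · intro i y
        have hfi : Finset.univ.sup' hu (fun j => φ j (x i)) = fv i := by
          apply le_antisymm
          · apply Finset.sup'_le
            intro j _
            simpa [hφ] using h i j
          · have := Finset.le_sup' (fun j => φ j (x i)) (Finset.mem_univ i)
            exact le_trans (le_of_eq (by simp [hφ])) this
        show Finset.univ.sup' hu (fun j => φ j y)
          ≥ Finset.univ.sup' hu (fun j => φ j (x i)) + ⟪g i, y - x i⟫
        rw [hfi]
        have hle := Finset.le_sup' (fun j => φ j y) (Finset.mem_univ i)
        have : fv i + ⟪g i, y - x i⟫ ≤ φ i y := by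
          simp only [hφ]
          nlinarith [sq_nonneg ‖y - x i‖, hμ]
        linarith [hle, this]
    · refine ⟨fun y => μ / 2 * ‖y‖ ^ 2, ?_, fun i => absurd ⟨i⟩ hne, fun i => absurd ⟨i⟩ hne⟩
      simpa using convexOn_const (0:ℝ) convex_univ
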